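/- For every integer M ≥ 1, every integer r ≥ 1, and every non-prime integer k with r ≤ k ≤ M·r, one has Pr(r,k) ≤ (1 − 1/M)^(π(k)). -/
import Mathlib


open scoped Classical

/-- A tuple `η : Fin r → ℕ` (with entries thought of as lying in `{1,…,M}`) is *admissible*
if no proper partial sum `η₁ + ⋯ + η_ℓ` (for `1 ≤ ℓ < r`) is a prime number. -/
def IsAdmissible (r : ℕ) (η : Fin r → ℕ) : Prop :=
  ∀ ℓ : ℕ, 1 ≤ ℓ → ℓ < r →
    ¬ Nat.Prime (∑ i ∈ Finset.univ.filter (fun i : Fin r => (i : ℕ) < ℓ), η i)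

/-- `PrRK M r k = M⁻ʳ · #{admissible tuples in {1,…,M}ʳ of length r with total sum k}`. -/
noncomputable def PrRK (M r k : ℕ) : ℝ :=
  (((Fintype.piFinset fun _ : Fin r => Finset.Icc 1 M).filter
      (fun η => IsAdmissible r η ∧ (∑ i, η i) = k)).card : ℝ) / (M : ℝ) ^ r

/-- extend a tuple to a function on ℕ by zero -/
def gg (n : ℕ) (η : Fin n → ℕ) (i : ℕ) : ℕ := if h : i < n then η ⟨i, h⟩ else 0

lemma psum_eq (n ℓ : ℕ) (η : Fin n → ℕ) (hℓ : ℓ ≤ n) :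
    ∑ i ∈ Finset.univ.filter (fun i : Fin n => (i : ℕ) < ℓ), η i
      = ∑ i ∈ Finset.range ℓ, gg n η i := by
  rw [Finset.sum_filter]
  have h1 : ∀ i : Fin n, (if (i : ℕ) < ℓ then η i else 0)
      = (fun j => if j < ℓ then gg n η j else 0) (i : ℕ) := by
    intro i
    simp [gg, i.isLt]
  simp only [h1]
  rw [Fin.sum_univ_eq_sum_range (fun j => if j < ℓ then gg n η j else 0) n,
    ← Finset.sum_filter]
  congr 1
  ext j
  simp only [Finset.mem_filter, Finset.mem_range]
  omega

lemma tsum_eq (n : ℕ) (η : Fin n → ℕ) : ∑ i, η i = ∑ i ∈ Finset.range n, gg n η i := by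
  have := psum_eq n n η le_rfl
  simpa [Finset.filter_true_of_mem, Fin.is_lt] using this

lemma gg_init (n : ℕ) (η : Fin (n+1) → ℕ) (i : ℕ) (hi : i < n) :
    gg n (Fin.init η) i = gg (n+1) η i := by
  simp [gg, hi, hi.trans (Nat.lt_succ_self n), Fin.init, Fin.castSucc, Fin.castAdd, Fin.castLE]

lemma psum_init (n ℓ : ℕ) (η : Fin (n+1) → ℕ) (hℓ : ℓ ≤ n) :
    ∑ i ∈ Finset.univ.filter (fun i : Fin (n+1) => (i : ℕ) < ℓ), η i
      = ∑ i ∈ Finset.univ.filter (fun i : Fin n => (i : ℕ) < ℓ), Fin.init η i := by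
  rw [psum_eq (n+1) ℓ η (hℓ.trans (Nat.le_succ n)), psum_eq n ℓ (Fin.init η) hℓ]
  refine Finset.sum_congr rfl fun i hi => ?_
  rw [Finset.mem_range] at hi
  exact (gg_init n η i (hi.trans_le hℓ)).symm

lemma sum_split (n : ℕ) (η : Fin (n+1) → ℕ) :
    ∑ i, η i = ∑ i, Fin.init η i + η (Fin.last n) := by
  rw [Fin.sum_univ_castSucc]
  rfl

lemma adm_succ (n : ℕ) (hn : 1 ≤ n) (η : Fin (n+1) → ℕ) :
    IsAdmissible (n+1) η ↔ IsAdmissible n (Fin.init η) ∧ ¬ Nat.Prime (∑ i, Fin.init η i) := by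
  constructor
  · intro h
    constructor
    · intro ℓ h1 h2
      rw [← psum_init n ℓ η h2.le]
      exact h ℓ h1 (h2.trans (Nat.lt_succ_self n))
    · have := h n hn (Nat.lt_succ_self n)
      rw [psum_init n n η le_rfl] at this
      simpa [Finset.filter_true_of_mem, Fin.is_lt] using this
  · rintro ⟨h1, h2⟩ ℓ hℓ1 hℓ2
    rcases Nat.lt_or_ge ℓ n with h | h
    · rw [psum_init n ℓ η h.le]
      exact h1 ℓ hℓ1 h
    · have hℓn : ℓ = n := le_antisymm (Nat.lt_succ_iff.mp hℓ2) h
      subst hℓn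
      rw [psum_init ℓ ℓ η le_rfl]
      simpa [Finset.filter_true_of_mem, Fin.is_lt] using h2

noncomputable def SS (M r k : ℕ) : Finset (Fin r → ℕ) :=
  (Fintype.piFinset fun _ : Fin r => Finset.Icc 1 M).filter
      (fun η => IsAdmissible r η ∧ (∑ i, η i) = k)

lemma PrRK_eq (M r k : ℕ) : PrRK M r k = ((SS M r k).card : ℝ) / (M : ℝ) ^ r := rfl

lemma SS_recursion (M r k : ℕ) (hr : 1 ≤ r) :
    (SS M (r+1) k).card
      = ∑ j ∈ (Finset.Icc 1 M).filter (fun j => j ≤ k ∧ ¬ Nat.Prime (k - j)),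
          (SS M r (k - j)).card := by
  have hmaps : ∀ η ∈ SS M (r+1) k,
      η (Fin.last r) ∈ (Finset.Icc 1 M).filter (fun j => j ≤ k ∧ ¬ Nat.Prime (k - j)) := by
    intro η hη
    rw [SS, Finset.mem_filter, Fintype.mem_piFinset] at hη
    obtain ⟨hpi, hadm, hsum⟩ := hη
    have hsplit := sum_split r η
    have hlast : η (Fin.last r) ≤ k := by omega
    have hinit : ∑ i, Fin.init η i = k - η (Fin.last r) := by omega
    rw [Finset.mem_filter]
    refine ⟨hpi _, hlast, ?_⟩
    rw [← hinit]
    exact ((adm_succ r hr η).mp hadm).2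
  rw [Finset.card_eq_sum_card_fiberwise hmaps]
  refine Finset.sum_congr rfl fun j hj => ?_
  rw [Finset.mem_filter, Finset.mem_Icc] at hj
  obtain ⟨⟨hj1, hjM⟩, hjk, hjp⟩ := hj
  apply Finset.card_bij (fun η _ => Fin.init η)
  · intro η hη
    rw [Finset.mem_filter] at hη
    obtain ⟨hη, hlast⟩ := hη
    rw [SS, Finset.mem_filter, Fintype.mem_piFinset] at hη
    obtain ⟨hpi, hadm, hsum⟩ := hη
    have hsplit := sum_split r η
    rw [SS, Finset.mem_filter, Fintype.mem_piFinset]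
    exact ⟨fun i => hpi _, ((adm_succ r hr η).mp hadm).1, by omega⟩
  · intro η₁ h₁ η₂ h₂ hi
    rw [Finset.mem_filter] at h₁ h₂
    rw [← Fin.snoc_init_self η₁, ← Fin.snoc_init_self η₂, hi, h₁.2, h₂.2]
  · intro ν hν
    rw [SS, Finset.mem_filter, Fintype.mem_piFinset] at hν
    obtain ⟨hpi, hadm, hsum⟩ := hν
    refine ⟨Fin.snoc ν j, ?_, by simp⟩
    rw [Finset.mem_filter, SS, Finset.mem_filter, Fintype.mem_piFinset]
    have hinit : Fin.init (Fin.snoc ν j : Fin (r+1) → ℕ) = ν := by simp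
    have hlast : (Fin.snoc ν j : Fin (r+1) → ℕ) (Fin.last r) = j := by simp
    refine ⟨⟨?_, ?_, ?_⟩, hlast⟩
    · intro i
      refine Fin.lastCases ?_ ?_ i
      · rw [hlast]; exact Finset.mem_Icc.mpr ⟨hj1, hjM⟩
      · intro i; rw [Fin.snoc_castSucc]; exact hpi i
    · rw [adm_succ r hr, hinit, hsum]
      exact ⟨hadm, hjp⟩
    · rw [sum_split, hinit, hlast, hsum]
      omega

lemma pc_eq (m : ℕ) :
    m.primeCounting = ((Finset.range (m+1)).filter (fun p => Nat.Prime p)).card := by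
  rw [Nat.primeCounting, Nat.primeCounting', Nat.count_eq_card_filter_range]

lemma pc_sub (M k j : ℕ) (hjM : j ≤ M) (hjk : j ≤ k) (hk : ¬ Nat.Prime k) :
    k.primeCounting ≤ (k - j).primeCounting
      + ((Finset.Ico (k - M) k).filter (fun p => Nat.Prime p)).card := by
  rw [pc_eq, pc_eq]
  calc ((Finset.range (k+1)).filter (fun p => Nat.Prime p)).card
      ≤ (((Finset.range (k-j+1)).filter (fun p => Nat.Prime p))
          ∪ ((Finset.Ico (k - M) k).filter (fun p => Nat.Prime p))).card := by
        apply Finset.card_le_card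
        intro p hp
        rw [Finset.mem_filter, Finset.mem_range] at hp
        obtain ⟨hp1, hp2⟩ := hp
        have hpk : p ≠ k := fun h => hk (h ▸ hp2)
        rw [Finset.mem_union, Finset.mem_filter, Finset.mem_filter, Finset.mem_range,
          Finset.mem_Ico]
        by_cases hc : p ≤ k - j
        · exact Or.inl ⟨by omega, hp2⟩
        · exact Or.inr ⟨⟨by omega, by omega⟩, hp2⟩
    _ ≤ _ := Finset.card_union_le _ _

lemma t_le_pc (M k : ℕ) :
    ((Finset.Ico (k - M) k).filter (fun p => Nat.Prime p)).card ≤ k.primeCounting := by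
  rw [pc_eq]
  apply Finset.card_le_card
  intro p hp
  rw [Finset.mem_filter, Finset.mem_Ico] at hp
  rw [Finset.mem_filter, Finset.mem_range]
  exact ⟨by omega, hp.2⟩

lemma pc_le (k : ℕ) (hk : 1 ≤ k) : k.primeCounting ≤ k - 1 := by
  rw [pc_eq]
  calc ((Finset.range (k+1)).filter (fun p => Nat.Prime p)).card
      ≤ (Finset.Ico 2 (k+1)).card := by
        apply Finset.card_le_card
        intro p hp
        rw [Finset.mem_filter, Finset.mem_range] at hp
        rw [Finset.mem_Ico]
        exact ⟨hp.2.two_le, hp.1⟩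
    _ = k - 1 := by rw [Nat.card_Ico]; omega

lemma card_A_le (M k : ℕ) (hk : ¬ Nat.Prime k) :
    ((Finset.Icc 1 M).filter (fun j => j ≤ k ∧ ¬ Nat.Prime (k - j))).card
      + ((Finset.Ico (k - M) k).filter (fun p => Nat.Prime p)).card ≤ M := by
  set A := (Finset.Icc 1 M).filter (fun j => j ≤ k ∧ ¬ Nat.Prime (k - j)) with hA
  set T := (Finset.Ico (k - M) k).filter (fun p => Nat.Prime p) with hT
  set B := T.image (fun p => k - p) with hB
  have hTB : T.card = B.card := by
    rw [hB, Finset.card_image_of_injOn]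
    intro p hp q hq hpq
    have hp2 : p ∈ T := hp
    have hq2 : q ∈ T := hq
    rw [hT, Finset.mem_filter, Finset.mem_Ico] at hp2 hq2
    have hpq' : k - p = k - q := hpq
    omega
  have hBM : B ⊆ Finset.Icc 1 M := by
    intro b hb
    rw [hB, Finset.mem_image] at hb
    obtain ⟨p, hp, rfl⟩ := hb
    rw [hT, Finset.mem_filter, Finset.mem_Ico] at hp
    rw [Finset.mem_Icc]
    omega
  have hAM : A ⊆ Finset.Icc 1 M := Finset.filter_subset _ _
  have hdisj : Disjoint A B := by
    rw [Finset.disjoint_left]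
    intro a ha hab
    rw [hA, Finset.mem_filter] at ha
    rw [hB, Finset.mem_image] at hab
    obtain ⟨p, hp, rfl⟩ := hab
    rw [hT, Finset.mem_filter, Finset.mem_Ico] at hp
    have : k - (k - p) = p := by omega
    rw [this] at ha
    exact ha.2.2 hp.2
  calc A.card + T.card = (A ∪ B).card := by
        rw [hTB, Finset.card_union_of_disjoint hdisj]
    _ ≤ (Finset.Icc 1 M).card := Finset.card_le_card (Finset.union_subset hAM hBM)
    _ = M := by rw [Nat.card_Icc]; omega

lemma bernoulli_ineq (M : ℕ) (hM : 1 ≤ M) (n : ℕ) :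
    (M : ℝ) - n ≤ (M : ℝ) * (1 - 1 / (M : ℝ)) ^ n := by
  have hM0 : (0:ℝ) < M := by positivity
  have hb : (1 : ℝ) + (n : ℝ) * (-(1 / (M:ℝ))) ≤ (1 + (-(1 / (M:ℝ)))) ^ n := by
    apply one_add_mul_le_pow
    have : 1 / (M:ℝ) ≤ 1 := by
      rw [div_le_one hM0]; exact_mod_cast hM
    linarith
  have := mul_le_mul_of_nonneg_left hb (le_of_lt hM0)
  calc (M : ℝ) - n = (M:ℝ) * (1 + (n : ℝ) * (-(1 / (M:ℝ)))) := by
        field_simp; ring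
    _ ≤ (M:ℝ) * (1 + (-(1 / (M:ℝ)))) ^ n := this
    _ = (M : ℝ) * (1 - 1 / (M:ℝ)) ^ n := by ring_nf

lemma base_ineq (M : ℕ) (hM : 1 ≤ M) (n : ℕ) (hn : n ≤ M - 1) :
    1 / (M : ℝ) ≤ (1 - 1 / (M : ℝ)) ^ n := by
  have hM0 : (0:ℝ) < M := by positivity
  have hb := bernoulli_ineq M hM n
  have hn' : (n : ℝ) ≤ (M : ℝ) - 1 := by
    have h1 : (n:ℝ) ≤ ((M - 1 : ℕ) : ℝ) := by exact_mod_cast hn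
    rw [Nat.cast_sub hM] at h1
    simpa using h1
  rw [div_le_iff₀ hM0, mul_comm]
  linarith

lemma main_aux (M : ℕ) (hM : 1 ≤ M) : ∀ r : ℕ, 1 ≤ r → ∀ k : ℕ, ¬ Nat.Prime k →
    r ≤ k → k ≤ M * r → PrRK M r k ≤ (1 - 1 / (M : ℝ)) ^ k.primeCounting := by
  have hM0 : (0:ℝ) < M := by positivity
  have hq0 : (0:ℝ) ≤ 1 - 1 / (M : ℝ) := by
    have : 1 / (M:ℝ) ≤ 1 := by
      rw [div_le_one hM0]; exact_mod_cast hM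
    linarith
  have hq1 : 1 - 1 / (M : ℝ) ≤ 1 := by
    have : (0:ℝ) ≤ 1 / (M:ℝ) := by positivity
    linarith
  set q : ℝ := 1 - 1 / (M : ℝ) with hqdef
  intro r
  induction r with
  | zero => omega
  | succ r IH =>
    intro _ k hk hrk hkM
    rcases Nat.eq_zero_or_pos r with rfl | hr
    · -- base case r + 1 = 1
      have hcard : (SS M 1 k).card ≤ 1 := by
        apply Finset.card_le_one.mpr
        intro a ha b hb
        rw [SS, Finset.mem_filter] at ha hb
        funext i
        have hi : i = 0 := Subsingleton.elim i 0
        subst hi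
        have ha' : a 0 = k := by rw [← ha.2.2]; simp
        have hb' : b 0 = k := by rw [← hb.2.2]; simp
        rw [ha', hb']
      rw [PrRK_eq]
      calc ((SS M 1 k).card : ℝ) / (M:ℝ) ^ 1 ≤ 1 / (M:ℝ) ^ 1 := by
            gcongr
            exact_mod_cast hcard
        _ = 1 / (M:ℝ) := by norm_num
        _ ≤ q ^ k.primeCounting := by
            apply base_ineq M hM
            have := pc_le k (by omega)
            omega
    · -- inductive step
      have hr1 : 1 ≤ r := hr
      set t := ((Finset.Ico (k - M) k).filter (fun p => Nat.Prime p)).card with ht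
      set A := (Finset.Icc 1 M).filter (fun j => j ≤ k ∧ ¬ Nat.Prime (k - j)) with hA
      have htpc : t ≤ k.primeCounting := t_le_pc M k
      have hcardA : A.card + t ≤ M := card_A_le M k hk
      -- each fiber bound
      have hfiber : ∀ j ∈ A, ((SS M r (k - j)).card : ℝ)
          ≤ q ^ (k.primeCounting - t) * (M:ℝ) ^ r := by
        intro j hj
        rw [hA, Finset.mem_filter, Finset.mem_Icc] at hj
        obtain ⟨⟨hj1, hjM⟩, hjk, hjp⟩ := hj
        rcases Finset.eq_empty_or_nonempty (SS M r (k - j)) with he | ⟨η, hη⟩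
        · rw [he]; simp; positivity
        · rw [SS, Finset.mem_filter, Fintype.mem_piFinset] at hη
          obtain ⟨hpi, hadm, hsum⟩ := hη
          have hlow : r ≤ k - j := by
            rw [← hsum]
            calc r = ∑ _i : Fin r, 1 := by simp
              _ ≤ ∑ i, η i := Finset.sum_le_sum fun i _ =>
                  (Finset.mem_Icc.mp (hpi i)).1
          have hhigh : k - j ≤ M * r := by
            rw [← hsum]
            calc ∑ i, η i ≤ ∑ _i : Fin r, M := Finset.sum_le_sum fun i _ =>
                  (Finset.mem_Icc.mp (hpi i)).2
              _ = M * r := by simp [mul_comm]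
          have hIH := IH hr1 (k - j) hjp hlow hhigh
          rw [PrRK_eq, div_le_iff₀ (by positivity)] at hIH
          refine hIH.trans ?_
          apply mul_le_mul_of_nonneg_right ?_ (by positivity)
          apply pow_le_pow_of_le_one hq0 hq1
          have := pc_sub M k j hjM hjk hk
          omega
      -- sum up
      have hrec : ((SS M (r+1) k).card : ℝ) = ∑ j ∈ A, ((SS M r (k - j)).card : ℝ) := by
        rw [SS_recursion M r k hr1]
        push_cast
        rfl
      have hsumle : ((SS M (r+1) k).card : ℝ)
          ≤ (A.card : ℝ) * (q ^ (k.primeCounting - t) * (M:ℝ) ^ r) := by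
        rw [hrec]
        calc ∑ j ∈ A, ((SS M r (k - j)).card : ℝ)
            ≤ ∑ _j ∈ A, q ^ (k.primeCounting - t) * (M:ℝ) ^ r :=
              Finset.sum_le_sum hfiber
          _ = (A.card : ℝ) * (q ^ (k.primeCounting - t) * (M:ℝ) ^ r) := by
              rw [Finset.sum_const, nsmul_eq_mul]
      have hAle : (A.card : ℝ) ≤ (M : ℝ) - t := by
        have h1 : A.card ≤ M - t := by omega
        have h2 : t ≤ M := by omega
        have := (Nat.cast_le (α := ℝ)).mpr h1
        rw [Nat.cast_sub h2] at this
        exact this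
      have hMt : (M : ℝ) - t ≤ (M:ℝ) * q ^ t := bernoulli_ineq M hM t
      rw [PrRK_eq, div_le_iff₀ (by positivity)]
      calc ((SS M (r+1) k).card : ℝ)
          ≤ (A.card : ℝ) * (q ^ (k.primeCounting - t) * (M:ℝ) ^ r) := hsumle
        _ ≤ ((M:ℝ) * q ^ t) * (q ^ (k.primeCounting - t) * (M:ℝ) ^ r) := by
            apply mul_le_mul_of_nonneg_right (hAle.trans hMt) (by positivity)
        _ = (q ^ t * q ^ (k.primeCounting - t)) * ((M:ℝ) * (M:ℝ) ^ r) := by ring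
        _ = q ^ k.primeCounting * (M:ℝ) ^ (r+1) := by
            rw [← pow_add, Nat.add_sub_cancel' htpc, pow_succ]
            ring


/-- For every M ≥ 1, r ≥ 1 and non-prime k with r ≤ k ≤ M·r,
Pr(r,k) ≤ (1 − 1/M)^{π(k)}. -/
theorem PrRK_le_pow (M : ℕ) (hM : 1 ≤ M) (r : ℕ) (hr : 1 ≤ r) (k : ℕ)
    (hk : ¬ Nat.Prime k) (hrk : r ≤ k) (hkM : k ≤ M * r) :
    PrRK M r k ≤ (1 - 1 / (M : ℝ)) ^ k.primeCounting :=
  main_aux M hM r hr k hk hrk hkM
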